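/- Suppose G has at least one X–Y separator, let r be the minimum size of an X–Y separator of G, and let K be the unique important X–Y separator of size r. Then every important X–Y separator K* of G with K* ≠ K satisfies K* > K. -/

import Mathlib

variable {V : Type*}

/-- `K` is an `X`–`Y` separator of `G`: `K` avoids `X ∪ Y` and every walk
from a vertex of `X` to a vertex of `Y` meets `K` (i.e. there is no
`X`–`Y` path in `G \ K`). -/
def IsSeparator (G : SimpleGraph V) (X Y K : Set V) : Prop :=
  K ⊆ (X ∪ Y)ᶜ ∧
  ∀ x ∈ X, ∀ y ∈ Y, ∀ w : G.Walk x y, ∃ v ∈ w.support, v ∈ K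

/-- `NR G A B`: the vertices of `G \ B` that are not reachable from `A` in `G \ B`. -/
def NR (G : SimpleGraph V) (A B : Set V) : Set V :=
  {v | v ∉ B ∧ ¬ ∃ a ∈ A, ∃ w : G.Walk a v, ∀ x ∈ w.support, x ∉ B}

/-- `Reach G A B`: the vertices reachable from `A` in `G \ B`. -/
def Reach (G : SimpleGraph V) (A B : Set V) : Set V :=
  {v | ∃ a ∈ A, ∃ w : G.Walk a v, ∀ x ∈ w.support, x ∉ B}

/-- The order on `X`–`Y` separators: `K1 ≤ K2` iff `NR(G,Y,K1) ⊆ NR(G,Y,K2)`. -/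
def SepLE (G : SimpleGraph V) (Y K1 K2 : Set V) : Prop :=
  NR G Y K1 ⊆ NR G Y K2

/-- The strict order on `X`–`Y` separators. -/
def SepLT (G : SimpleGraph V) (Y K1 K2 : Set V) : Prop :=
  NR G Y K1 ⊆ NR G Y K2 ∧ NR G Y K1 ≠ NR G Y K2

/-- A minimal `X`–`Y` separator: no proper subset is an `X`–`Y` separator. -/
def IsMinimalSeparator (G : SimpleGraph V) (X Y K : Set V) : Prop :=
  IsSeparator G X Y K ∧ ∀ K' ⊂ K, ¬ IsSeparator G X Y K'

/-- An important `X`–`Y` separator: a minimal separator `K` such that there is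
no separator `K'` with `K < K'` and `|K'| ≤ |K|`. -/
def IsImportantSeparator (G : SimpleGraph V) (X Y K : Set V) : Prop :=
  IsMinimalSeparator G X Y K ∧
  ¬ ∃ K', IsSeparator G X Y K' ∧ SepLT G Y K K' ∧ K'.ncard ≤ K.ncard

/-- The minimum size of an `X`–`Y` separator of `G`. -/
noncomputable def minSepSize (G : SimpleGraph V) (X Y : Set V) : ℕ :=
  sInf {n | ∃ K, IsSeparator G X Y K ∧ K.ncard = n}

/-- The excess of a separator: its size minus the minimum separator size. -/
noncomputable def excess (G : SimpleGraph V) (X Y K : Set V) : ℕ :=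
  K.ncard - minSepSize G X Y

/-- The graph `Pr(G,X,Y,K)`: the vertices `NR(G,Y,K) \ X` are deleted (here:
made isolated), and every vertex of `X` is made adjacent to every vertex of `K`. -/
def PrGraph (G : SimpleGraph V) (X Y K : Set V) : SimpleGraph V where
  Adj u v := u ≠ v ∧ u ∉ NR G Y K \ X ∧ v ∉ NR G Y K \ X ∧
    (G.Adj u v ∨ (u ∈ X ∧ v ∈ K) ∨ (u ∈ K ∧ v ∈ X))
  symm := by
    constructor
    rintro u v ⟨h1, h2, h3, h4⟩
    refine ⟨h1.symm, h3, h2, ?_⟩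
    rcases h4 with h | h | h
    · exact Or.inl h.symm
    · exact Or.inr (Or.inr ⟨h.2, h.1⟩)
    · exact Or.inr (Or.inl ⟨h.2, h.1⟩)
  loopless := by constructor; rintro v ⟨h1, -⟩; exact h1 rfl

/-- `NSet G X` is `N(X)`: the set of vertices outside `X` adjacent to a vertex of `X`. -/
def NSet (G : SimpleGraph V) (X : Set V) : Set V :=
  {v | v ∉ X ∧ ∃ x ∈ X, G.Adj x v}

/-- `G` is `X`–`Y` normalized: `N(X)` is an `X`–`Y` separator and is
the unique smallest `X`–`Y` separator. -/
def Normalized (G : SimpleGraph V) (X Y : Set V) : Prop :=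
  IsSeparator G X Y (NSet G X) ∧
  ∀ K, IsSeparator G X Y K → K ≠ NSet G X → (NSet G X).ncard < K.ncard

/-- The cover excess `CE(S)`: the minimum excess of an `X`–`Y` separator disjoint from `S`. -/
noncomputable def CE (G : SimpleGraph V) (X Y S : Set V) : ℕ :=
  sInf {n | ∃ K, IsSeparator G X Y K ∧ Disjoint K S ∧ excess G X Y K = n}

/-- A witness of `S`: an `X`–`Y` separator disjoint from `S` whose excess equals `CE(S)`. -/
noncomputable def IsWitness (G : SimpleGraph V) (X Y S K : Set V) : Prop :=
  IsSeparator G X Y K ∧ Disjoint K S ∧ excess G X Y K = CE G X Y S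

/-- An important witness of `S`: a witness of `S` that is an important `X`–`Y` separator. -/
noncomputable def IsImportantWitness (G : SimpleGraph V) (X Y S K : Set V) : Prop :=
  IsWitness G X Y S K ∧ IsImportantSeparator G X Y K


section AuxSeparatorLemmas

variable {G : SimpleGraph V} {X Y A B K S1 S2 : Set V}

private lemma mem_NR_iff'' {v : V} : v ∈ NR G A B ↔ v ∉ B ∧ v ∉ Reach G A B := Iff.rfl

private lemma mem_reach_self' {a : V} (ha : a ∈ A) (hb : a ∉ B) : a ∈ Reach G A B :=
  ⟨a, ha, SimpleGraph.Walk.nil, by simp [hb]⟩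

private lemma reach_not_mem' {v : V} (h : v ∈ Reach G A B) : v ∉ B := by
  obtain ⟨a, ha, w, hw⟩ := h
  exact hw v w.end_mem_support

private lemma reach_adj' {u v : V} (hu : u ∈ Reach G A B) (h : G.Adj u v) (hv : v ∉ B) :
    v ∈ Reach G A B := by
  obtain ⟨a, ha, w, hw⟩ := hu
  refine ⟨a, ha, w.concat h, ?_⟩
  intro z hz
  rw [SimpleGraph.Walk.support_concat, List.mem_append] at hz
  rcases hz with hz | hz
  · exact hw z hz
  · simp at hz; subst hz; exact hv

private lemma support_subset_reach' {a v : V} (ha : a ∈ A) (w : G.Walk a v)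
    (hw : ∀ z ∈ w.support, z ∉ B) : ∀ z ∈ w.support, z ∈ Reach G A B := by
  classical
  intro z hz
  exact ⟨a, ha, w.takeUntil z hz, fun x hx => hw x (w.support_takeUntil_subset hz hx)⟩

private lemma reach_X_Y_disjoint' (hK : IsSeparator G X Y K) {v : V}
    (h1 : v ∈ Reach G X K) (h2 : v ∈ Reach G Y K) : False := by
  obtain ⟨x, hx, wx, hwx⟩ := h1
  obtain ⟨y, hy, wy, hwy⟩ := h2
  obtain ⟨z, hz, hzK⟩ := hK.2 x hx y hy (wx.append wy.reverse)
  rw [SimpleGraph.Walk.support_append, List.mem_append] at hz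
  rcases hz with hz | hz
  · exact hwx z hz hzK
  · have : z ∈ wy.reverse.support := List.mem_of_mem_tail hz
    rw [SimpleGraph.Walk.support_reverse, List.mem_reverse] at this
    exact hwy z this hzK

private lemma exists_exit' : ∀ {a b : V} (w : G.Walk a b), a ∈ A → b ∉ A →
    ∃ z ∈ w.support, z ∈ NSet G A := by
  intro a b w
  induction w with
  | nil => intro ha hb; exact absurd ha hb
  | @cons a c b h p ih =>
    intro ha hb
    by_cases hc : c ∈ A
    · obtain ⟨z, hz, hzN⟩ := ih hc hb
      exact ⟨z, by simp [hz], hzN⟩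
    · exact ⟨c, by simp, hc, a, ha, h⟩

private lemma nset_separator' (hX : X ⊆ A) (hY : ∀ y ∈ Y, y ∉ A)
    (hN : NSet G A ⊆ (X ∪ Y)ᶜ) : IsSeparator G X Y (NSet G A) :=
  ⟨hN, fun x hx y hy w => exists_exit' w (hX hx) (hY y hy)⟩

private lemma exists_adj_reach' [DecidableEq V] {s v : V} (p : G.Walk s v) (hs : s ∈ A)
    (hsK : s ∉ K) (hvK : v ∈ K) (hav : ∀ z ∈ p.support, z ∉ K \ {v})
    (hcnt : p.support.count v = 1) :
    ∃ c, G.Adj v c ∧ c ∈ Reach G A K := by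
  have hne : v ≠ s := fun h => hsK (h ▸ hvK)
  have hnn : ¬ p.reverse.Nil := SimpleGraph.Walk.not_nil_of_ne hne
  obtain ⟨c, h, q, hq⟩ := SimpleGraph.Walk.not_nil_iff.mp hnn
  have hrev : p.reverse.support = p.support.reverse := p.support_reverse
  have hsup : p.reverse.support = v :: q.support := by rw [hq]; rfl
  have hcount : (v :: q.support).count v = 1 := by
    rw [← hsup, hrev, List.count_reverse, hcnt]
  have hvq : v ∉ q.support := by
    rw [List.count_cons_self] at hcount
    exact List.count_eq_zero.mp (by omega)
  refine ⟨c, h, s, hs, q.reverse, ?_⟩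
  intro z hz
  rw [SimpleGraph.Walk.support_reverse, List.mem_reverse] at hz
  have hzp : z ∈ p.support := by
    have : z ∈ p.reverse.support := by rw [hsup]; exact List.mem_cons_of_mem _ hz
    rwa [hrev, List.mem_reverse] at this
  intro hzK
  exact hav z hzp ⟨hzK, fun hzv => hvq ((Set.mem_singleton_iff.mp hzv) ▸ hz)⟩

private lemma minimal_mem_walk' (hm : IsMinimalSeparator G X Y K) {v : V} (hv : v ∈ K) :
    ∃ x ∈ X, ∃ y ∈ Y, ∃ w : G.Walk x y, (∀ z ∈ w.support, z ∉ K \ {v}) ∧ v ∈ w.support := by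
  have hns := hm.2 (K \ {v}) (Set.sdiff_singleton_ssubset.mpr hv)
  rw [IsSeparator, not_and] at hns
  have hsub : K \ {v} ⊆ (X ∪ Y)ᶜ := (Set.diff_subset).trans hm.1.1
  push_neg at hns
  obtain ⟨x, hx, y, hy, w, hw⟩ := hns hsub
  obtain ⟨z, hz, hzK⟩ := hm.1.2 x hx y hy w
  have hzv : z = v := by
    by_contra hne
    exact hw z hz ⟨hzK, hne⟩
  exact ⟨x, hx, y, hy, w, hw, hzv ▸ hz⟩

private lemma minimal_adj_reachX' (hm : IsMinimalSeparator G X Y K) {v : V} (hv : v ∈ K) :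
    ∃ c, G.Adj v c ∧ c ∈ Reach G X K := by
  classical
  obtain ⟨x, hx, y, hy, w, hw, hvw⟩ := minimal_mem_walk' hm hv
  have hxK : x ∉ K := fun h => hm.1.1 h (Or.inl hx)
  exact exists_adj_reach' (w.takeUntil v hvw) hx hxK hv
    (fun z hz => hw z (w.support_takeUntil_subset hvw hz))
    (w.count_support_takeUntil_eq_one hvw)

private lemma minimal_adj_reachY' (hm : IsMinimalSeparator G X Y K) {v : V} (hv : v ∈ K) :
    ∃ c, G.Adj v c ∧ c ∈ Reach G Y K := by
  classical
  obtain ⟨x, hx, y, hy, w, hw, hvw⟩ := minimal_mem_walk' hm hv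
  have hvw' : v ∈ w.reverse.support := by
    rwa [SimpleGraph.Walk.support_reverse, List.mem_reverse]
  have hyK : y ∉ K := fun h => hm.1.1 h (Or.inr hy)
  exact exists_adj_reach' (w.reverse.takeUntil v hvw') hy hyK hv
    (fun z hz => hw z (by
      have := w.reverse.support_takeUntil_subset hvw' hz
      rwa [SimpleGraph.Walk.support_reverse, List.mem_reverse] at this))
    (w.reverse.count_support_takeUntil_eq_one hvw')

private lemma walk_in_T' (h1 : IsMinimalSeparator G X Y S1) (h2 : IsSeparator G X Y S2)
    (hR : Reach G X S1 ⊆ Reach G X S2) :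
    ∀ {a b : V} (p : G.Walk a b), (∀ z ∈ p.support, z ∈ Reach G Y S2) →
      a ∈ S1 ∪ Reach G Y S1 → b ∈ S1 ∪ Reach G Y S1 := by
  intro a b p
  induction p with
  | nil => intro _ h; exact h
  | @cons a c b h p ih =>
    intro hsup ha
    have haR : a ∈ Reach G Y S2 := hsup a (by simp)
    rcases ha with haS1 | haY
    · exfalso
      obtain ⟨e, he, heR⟩ := minimal_adj_reachX' h1 haS1
      have haS2 : a ∉ S2 := reach_not_mem' haR
      exact reach_X_Y_disjoint' h2 (reach_adj' (hR heR) he.symm haS2) haR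
    · have hsup' : ∀ z ∈ p.support, z ∈ Reach G Y S2 := fun z hz => hsup z (by simp [hz])
      by_cases hc : c ∈ S1
      · exact ih hsup' (Or.inl hc)
      · exact ih hsup' (Or.inr (reach_adj' haY h hc))

private lemma reachY_subset_T' (h1 : IsMinimalSeparator G X Y S1) (h2 : IsSeparator G X Y S2)
    (hR : Reach G X S1 ⊆ Reach G X S2) :
    Reach G Y S2 ⊆ S1 ∪ Reach G Y S1 := by
  rintro v ⟨y, hy, w, hw⟩
  have hyS1 : y ∉ S1 := fun h => h1.1.1 h (Or.inr hy)
  exact walk_in_T' h1 h2 hR w (support_subset_reach' hy w hw)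
    (Or.inr (mem_reach_self' hy hyS1))

private lemma T_antitone' (h1 : IsMinimalSeparator G X Y S1) (h2 : IsMinimalSeparator G X Y S2)
    (hR : Reach G X S1 ⊆ Reach G X S2) :
    S2 ∪ Reach G Y S2 ⊆ S1 ∪ Reach G Y S1 := by
  rintro v (hv | hv)
  · by_cases hvS1 : v ∈ S1
    · exact Or.inl hvS1
    obtain ⟨d, hd, hdR⟩ := minimal_adj_reachY' h2 hv
    rcases reachY_subset_T' h1 h2.1 hR hdR with hdS1 | hdY
    · exfalso
      obtain ⟨e, he, heR⟩ := minimal_adj_reachX' h1 hdS1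
      have hdS2 : d ∉ S2 := reach_not_mem' hdR
      exact reach_X_Y_disjoint' h2.1 (reach_adj' (hR heR) he.symm hdS2) hdR
    · exact Or.inr (reach_adj' hdY hd.symm hvS1)
  · exact reachY_subset_T' h1 h2.1 hR hv

private lemma NR_mono_of_reach' (h1 : IsMinimalSeparator G X Y S1)
    (h2 : IsMinimalSeparator G X Y S2)
    (hR : Reach G X S1 ⊆ Reach G X S2) : NR G Y S1 ⊆ NR G Y S2 := by
  intro v hv
  rw [mem_NR_iff''] at hv ⊢
  constructor
  · intro hvS2
    rcases T_antitone' h1 h2 hR (Or.inl hvS2) with h | h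
    · exact hv.1 h
    · exact hv.2 h
  · intro hvR
    rcases T_antitone' h1 h2 hR (Or.inr hvR) with h | h
    · exact hv.1 h
    · exact hv.2 h

private lemma reachX_subset_NR' (hs : IsSeparator G X Y K) : Reach G X K ⊆ NR G Y K :=
  fun _ hv => ⟨reach_not_mem' hv, fun h => reach_X_Y_disjoint' hs hv h⟩

private lemma subset_of_NR_eq' (h1 : IsMinimalSeparator G X Y S1) (h2 : IsSeparator G X Y S2)
    (h : NR G Y S1 = NR G Y S2) : S1 ⊆ S2 := by
  have hR : Reach G X S1 ⊆ Reach G X S2 := by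
    rintro v ⟨x, hx, w, hw⟩
    refine ⟨x, hx, w, fun z hz => ?_⟩
    have : z ∈ NR G Y S2 :=
      h ▸ reachX_subset_NR' h1.1 (support_subset_reach' hx w hw z hz)
    exact this.1
  intro v hv
  by_contra hvS2
  obtain ⟨c, hc, hcR⟩ := minimal_adj_reachX' h1 hv
  have hvR2 : v ∈ Reach G X S2 := reach_adj' (hR hcR) hc.symm hvS2
  have : v ∈ NR G Y S1 := h ▸ reachX_subset_NR' h2 hvR2
  exact this.1 hv

private lemma exists_minimal_aux' [Fintype V] :
    ∀ (n : ℕ) (S : Set V), S.ncard ≤ n → IsSeparator G X Y S →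
      ∃ L, L ⊆ S ∧ IsMinimalSeparator G X Y L := by
  intro n
  induction n with
  | zero =>
    intro S hcard hS
    refine ⟨S, subset_rfl, hS, fun K' hK' _ => ?_⟩
    have : S = ∅ := Set.ncard_eq_zero (Set.toFinite S) |>.mp (Nat.le_zero.mp hcard)
    exact absurd (this ▸ hK') (by simp [Set.ssubset_iff_subset_ne, Set.subset_empty_iff])
  | succ n ih =>
    intro S hcard hS
    by_cases hmin : ∀ K' ⊂ S, ¬ IsSeparator G X Y K'
    · exact ⟨S, subset_rfl, hS, hmin⟩
    · push_neg at hmin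
      obtain ⟨K', hK'sub, hK'⟩ := hmin
      have : K'.ncard < S.ncard := Set.ncard_lt_ncard hK'sub (Set.toFinite S)
      obtain ⟨L, hL, hLmin⟩ := ih K' (by omega) hK'
      exact ⟨L, hL.trans hK'sub.subset, hLmin⟩

end AuxSeparatorLemmas

/-- Suppose `G` has at least one `X`–`Y` separator, let `r` be
the minimum size of an `X`–`Y` separator and `K` the unique important `X`–`Y`
separator of size `r`.  Then every important `X`–`Y` separator `K* ≠ K`
satisfies `K* > K`. -/
theorem smallest_important_separator_lt
    {V : Type*} [Fintype V] (G : SimpleGraph V) (X Y K : Set V)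
    (hXY : Disjoint X Y) (hex : ∃ K', IsSeparator G X Y K')
    (hK : IsImportantSeparator G X Y K ∧ K.ncard = minSepSize G X Y) :
    ∀ Kstar : Set V, IsImportantSeparator G X Y Kstar → Kstar ≠ K →
      SepLT G Y K Kstar := by
  classical
  obtain ⟨⟨hKmin, hKimp⟩, hKcard⟩ := hK
  intro Kstar hKs hne
  obtain ⟨hKsmin, hKsimp⟩ := hKs
  have hsepK : IsSeparator G X Y K := hKmin.1
  have hsepKs : IsSeparator G X Y Kstar := hKsmin.1
  set R1 := Reach G X K with hR1def
  set R2 := Reach G X Kstar with hR2def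
  have hXR1 : X ⊆ R1 := fun x hx => mem_reach_self' hx (fun h => hsepK.1 h (Or.inl hx))
  have hXR2 : X ⊆ R2 := fun x hx => mem_reach_self' hx (fun h => hsepKs.1 h (Or.inl hx))
  have hYR1 : ∀ y ∈ Y, y ∉ R1 := by
    rintro y hy ⟨x, hx, w, hw⟩
    obtain ⟨z, hz, hzK⟩ := hsepK.2 x hx y hy w
    exact hw z hz hzK
  have hYR2 : ∀ y ∈ Y, y ∉ R2 := by
    rintro y hy ⟨x, hx, w, hw⟩
    obtain ⟨z, hz, hzK⟩ := hsepKs.2 x hx y hy w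
    exact hw z hz hzK
  -- the two neighborhood separators
  have hNA_sub : NSet G (R1 ∪ R2) ⊆ NSet G R1 ∪ NSet G R2 := by
    rintro v ⟨hv, u, hu, huv⟩
    rcases hu with hu | hu
    · exact Or.inl ⟨fun h => hv (Or.inl h), u, hu, huv⟩
    · exact Or.inr ⟨fun h => hv (Or.inr h), u, hu, huv⟩
  have hNI_sub : NSet G (R1 ∩ R2) ⊆ NSet G R1 ∪ NSet G R2 := by
    rintro v ⟨hv, u, hu, huv⟩
    by_cases hv1 : v ∈ R1
    · exact Or.inr ⟨fun h => hv ⟨hv1, h⟩, u, hu.2, huv⟩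
    · exact Or.inl ⟨hv1, u, hu.1, huv⟩
  have hN1K : NSet G R1 ⊆ K := by
    rintro v ⟨hv, u, hu, huv⟩
    by_contra hvK
    exact hv (reach_adj' hu huv hvK)
  have hN2K : NSet G R2 ⊆ Kstar := by
    rintro v ⟨hv, u, hu, huv⟩
    by_contra hvK
    exact hv (reach_adj' hu huv hvK)
  have hcomplA : NSet G (R1 ∪ R2) ⊆ (X ∪ Y)ᶜ := fun v hv => by
    rcases hNA_sub hv with h | h
    · exact hsepK.1 (hN1K h)
    · exact hsepKs.1 (hN2K h)
  have hcomplI : NSet G (R1 ∩ R2) ⊆ (X ∪ Y)ᶜ := fun v hv => by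
    rcases hNI_sub hv with h | h
    · exact hsepK.1 (hN1K h)
    · exact hsepKs.1 (hN2K h)
  have sepA : IsSeparator G X Y (NSet G (R1 ∪ R2)) :=
    nset_separator' (fun x hx => Or.inl (hXR1 hx))
      (fun y hy h => by rcases h with h | h; exacts [hYR1 y hy h, hYR2 y hy h]) hcomplA
  have sepI : IsSeparator G X Y (NSet G (R1 ∩ R2)) :=
    nset_separator' (fun x hx => ⟨hXR1 hx, hXR2 hx⟩)
      (fun y hy h => hYR1 y hy h.1) hcomplI
  -- submodularity cardinality estimate
  have hsub2 : NSet G (R1 ∪ R2) ∩ NSet G (R1 ∩ R2) ⊆ NSet G R1 ∩ NSet G R2 := by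
    rintro v ⟨⟨hv, -⟩, ⟨-, u, hu, huv⟩⟩
    exact ⟨⟨fun h => hv (Or.inl h), u, hu.1, huv⟩, ⟨fun h => hv (Or.inr h), u, hu.2, huv⟩⟩
  have hsub1 : NSet G (R1 ∪ R2) ∪ NSet G (R1 ∩ R2) ⊆ NSet G R1 ∪ NSet G R2 := by
    rintro v (hv | hv)
    · exact hNA_sub hv
    · exact hNI_sub hv
  have e1 : (NSet G (R1 ∪ R2)).ncard + (NSet G (R1 ∩ R2)).ncard
      = (NSet G (R1 ∪ R2) ∪ NSet G (R1 ∩ R2)).ncard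
        + (NSet G (R1 ∪ R2) ∩ NSet G (R1 ∩ R2)).ncard :=
    (Set.ncard_union_add_ncard_inter _ _ (Set.toFinite _) (Set.toFinite _)).symm
  have e2 : (NSet G R1 ∪ NSet G R2).ncard + (NSet G R1 ∩ NSet G R2).ncard
      = (NSet G R1).ncard + (NSet G R2).ncard :=
    Set.ncard_union_add_ncard_inter _ _ (Set.toFinite _) (Set.toFinite _)
  have le1 : (NSet G (R1 ∪ R2) ∪ NSet G (R1 ∩ R2)).ncard
      ≤ (NSet G R1 ∪ NSet G R2).ncard := Set.ncard_le_ncard hsub1 (Set.toFinite _)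
  have le2 : (NSet G (R1 ∪ R2) ∩ NSet G (R1 ∩ R2)).ncard
      ≤ (NSet G R1 ∩ NSet G R2).ncard := Set.ncard_le_ncard hsub2 (Set.toFinite _)
  have le3 : (NSet G R1).ncard ≤ K.ncard := Set.ncard_le_ncard hN1K (Set.toFinite _)
  have le4 : (NSet G R2).ncard ≤ Kstar.ncard := Set.ncard_le_ncard hN2K (Set.toFinite _)
  have le5 : K.ncard ≤ (NSet G (R1 ∩ R2)).ncard := by
    rw [hKcard]
    exact Nat.sInf_le ⟨NSet G (R1 ∩ R2), sepI, rfl⟩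
  have hcardA : (NSet G (R1 ∪ R2)).ncard ≤ Kstar.ncard := by omega
  -- a minimal separator inside NSet G (R1 ∪ R2)
  obtain ⟨L, hLsub, hLmin⟩ :=
    exists_minimal_aux' (NSet G (R1 ∪ R2)).ncard (NSet G (R1 ∪ R2)) le_rfl sepA
  have hLcard : L.ncard ≤ Kstar.ncard :=
    le_trans (Set.ncard_le_ncard hLsub (Set.toFinite _)) hcardA
  -- reach inclusions into Reach G X L
  have hdisj : ∀ z, z ∈ R1 ∪ R2 → z ∉ L := fun z hz hzL => (hLsub hzL).1 hz
  have hR1L : R1 ⊆ Reach G X L := by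
    rintro v ⟨x, hx, w, hw⟩
    exact ⟨x, hx, w, fun z hz =>
      hdisj z (Or.inl (support_subset_reach' hx w hw z hz))⟩
  have hR2L : R2 ⊆ Reach G X L := by
    rintro v ⟨x, hx, w, hw⟩
    exact ⟨x, hx, w, fun z hz =>
      hdisj z (Or.inr (support_subset_reach' hx w hw z hz))⟩
  have h1 : NR G Y Kstar ⊆ NR G Y L := NR_mono_of_reach' hKsmin hLmin hR2L
  have h2 : NR G Y K ⊆ NR G Y L := NR_mono_of_reach' hKmin hLmin hR1L
  have heq : NR G Y Kstar = NR G Y L := by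
    by_contra hne'
    exact hKsimp ⟨L, hLmin.1, ⟨h1, hne'⟩, hLcard⟩
  constructor
  · intro v hv
    rw [heq]
    exact h2 hv
  · intro hNReq
    have h12 : K ⊆ Kstar := subset_of_NR_eq' hKmin hKsmin.1 hNReq
    have h21 : Kstar ⊆ K := subset_of_NR_eq' hKsmin hKmin.1 hNReq.symm
    exact hne (Set.Subset.antisymm h21 h12)
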